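/- For every optimal prefix-free machine V there exists an optimal prefix-free machine W such that: (i) H_W(s) = H_V(s) for every finite binary string s; (ii) W⁻¹(s) = {p : W(p) = s} is a finite set for every s; and (iii) there exists a total recursive function f : {0,1}* → ℕ⁺ such that #W⁻¹(s) ≤ f(s) for every s ∈ {0,1}*. -/

import Mathlib

open scoped ENNReal

/-- A set of binary strings is prefix-free: no element is a proper prefix of another. -/
def PrefixFreeSet (S : Set (List Bool)) : Prop :=
  ∀ p ∈ S, ∀ q ∈ S, p <+: q → p = q

/-- A prefix-free machine: a partial recursive function on binary strings
whose domain is a prefix-free set. -/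
def PFMachine (C : List Bool →. List Bool) : Prop :=
  Partrec C ∧ PrefixFreeSet C.Dom

/-- `Hm C s` is the length of a shortest program `p` with `C p = s` (`∞` if none). -/
noncomputable def Hm (C : List Bool →. List Bool) (s : List Bool) : ℕ∞ :=
  sInf ((fun p : List Bool => (p.length : ℕ∞)) '' {p | s ∈ C p})

/-- An optimal prefix-free machine: for every prefix-free machine `C` there is `d ∈ ℕ`
such that every `p ∈ dom C` has a `q` with `U q = C p` and `|q| ≤ |p| + d`. -/
def OptimalPFM (U : List Bool →. List Bool) : Prop :=
  PFMachine U ∧ ∀ C : List Bool →. List Bool, PFMachine C →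
    ∃ d : ℕ, ∀ p s, s ∈ C p → ∃ q : List Bool, s ∈ U q ∧ q.length ≤ p.length + d

/-- The binary string identified with `n : ℕ` via `φ(s) = (the dyadic integer 1s) − 1`. -/
def strOfNat (n : ℕ) : List Bool := ((n + 1).bits.dropLast).reverse

namespace FiniteFiberAux

open Nat.Partrec (Code)
open Nat.Partrec.Code
open Encodable

def enc2 (s : List Bool) : List Bool := (s.flatMap fun b => [b, b]) ++ [true, false]

@[simp] lemma enc2_nil : enc2 [] = [true, false] := rfl

@[simp] lemma enc2_cons (b : Bool) (s : List Bool) : enc2 (b :: s) = b :: b :: enc2 s := by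
  simp [enc2]

lemma enc2_length (s : List Bool) : (enc2 s).length = 2 * s.length + 2 := by
  induction s with
  | nil => rfl
  | cons b s ih => simp [ih]; omega

lemma enc2_prefix : ∀ {s s' : List Bool}, enc2 s <+: enc2 s' → s = s'
  | [], [], _ => rfl
  | [], b :: s', h => by
      simp only [enc2_nil, enc2_cons, List.cons_prefix_cons] at h
      obtain ⟨h1, h2, -⟩ := h
      subst h1; exact absurd h2 (by simp)
  | a :: s, [], h => by
      have := h.length_le
      simp [enc2_length] at this
  | a :: s, b :: s', h => by
      simp only [enc2_cons, List.cons_prefix_cons] at h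
      obtain ⟨h1, -, h3⟩ := h
      subst h1
      rw [enc2_prefix h3]

def ext2 (p : List Bool) : List Bool :=
  (List.range ((p.length - 2) / 2)).map fun i => p.getD (2 * i) false

def dec2 (p : List Bool) : Option (List Bool) :=
  if enc2 (ext2 p) = p then some (ext2 p) else none

lemma dec2_some {p s : List Bool} (h : dec2 p = some s) : p = enc2 s := by
  unfold dec2 at h
  split at h
  · next heq => cases h; exact heq.symm
  · cases h

lemma enc2_getD (s : List Bool) : ∀ i, i < s.length → (enc2 s).getD (2 * i) false = s.getD i false := by
  induction s with
  | nil => intro i hi; simp at hi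
  | cons b s ih =>
    intro i hi
    cases i with
    | zero => simp
    | succ j =>
      have := ih j (by simpa using Nat.lt_of_succ_lt_succ hi)
      simp only [enc2_cons]
      have h2 : 2 * (j + 1) = (2 * j) + 1 + 1 := by omega
      rw [h2]
      simpa using this

lemma ext2_enc2 (s : List Bool) : ext2 (enc2 s) = s := by
  unfold ext2
  have hlen : ((enc2 s).length - 2) / 2 = s.length := by rw [enc2_length]; omega
  rw [hlen]
  apply List.ext_getElem
  · simp
  · intro i h1 h2
    simp only [List.getElem_map, List.getElem_range]
    rw [List.getD_eq_getElem?_getD]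
    have := enc2_getD s i (by simpa using h2)
    rw [List.getD_eq_getElem?_getD] at this
    rw [this, List.getD_eq_getElem?_getD, List.getElem?_eq_getElem h2]
    rfl

lemma dec2_enc2 (s : List Bool) : dec2 (enc2 s) = some s := by
  unfold dec2
  rw [ext2_enc2]
  simp

def Cdup : List Bool →. List Bool := fun p => (dec2 p : Part (List Bool))

lemma mem_Cdup {p s : List Bool} : s ∈ Cdup p ↔ dec2 p = some s := by
  simp [Cdup, Part.mem_ofOption]

lemma Cdup_partrec : Partrec Cdup := by
  apply Computable.ofOption
  have hs : Primrec ext2 := by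
    unfold ext2
    apply Primrec.list_map
    · exact Primrec.list_range.comp (Primrec.nat_div.comp
        (Primrec.nat_sub.comp Primrec.list_length (Primrec.const 2)) (Primrec.const 2))
    · exact ((Primrec.list_getD false).comp Primrec.fst
        ((Primrec.nat_mul.comp (Primrec.const 2) Primrec.snd))).to₂
  have henc2 : Primrec enc2 := by
    unfold enc2
    exact Primrec.list_append.comp
      (Primrec.list_flatMap Primrec.id ((Primrec.list_cons.comp Primrec.snd
        (Primrec.list_cons.comp Primrec.snd (Primrec.const []))).to₂))
      (Primrec.const [true, false])
  have h1 : Primrec dec2 := by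
    unfold dec2
    exact (Primrec.ite (Primrec.eq.comp (henc2.comp hs) Primrec.id)
      (Primrec.option_some.comp hs) (Primrec.const none))
  exact h1.to_comp

lemma bool_decode_encode : ∀ {k : ℕ} {b : Bool}, (decode k : Option Bool) = some b →
    encode b = k
  | 0, b, h => by simp at h; subst h; rfl
  | 1, b, h => by simp at h; subst h; rfl
  | (n+2), b, h => by rw [Encodable.decode_ge_two _ (by omega)] at h; cases h

lemma list_decode_encode : ∀ {m : ℕ} {q : List Bool}, (decode m : Option (List Bool)) = some q →
    encode q = m
  | 0, q, h => by simp at h; subst h; rfl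
  | (v+1), q, h => by
      rw [show (v+1) = Nat.succ v from rfl, Encodable.decode_list_succ] at h
      simp only [Seq.seq, Option.map_eq_map, Option.bind_eq_bind] at h
      rcases hb : (decode v.unpair.1 : Option Bool) with _ | a
      · simp [hb] at h
      rcases hl : (decode v.unpair.2 : Option (List Bool)) with _ | l
      · simp [hb, hl] at h
      have hl2 : encode l = v.unpair.2 := list_decode_encode hl
      simp [hb, hl] at h
      subst h
      rw [Encodable.encode_list_cons, bool_decode_encode hb, hl2, Nat.pair_unpair]
  decreasing_by exact Nat.lt_succ_of_le (Nat.unpair_right_le v)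

/-! ### The main machine -/

def beats (c : Code) (t x np m : ℕ) : Bool :=
  decide (evaln t c m = some x ∧ ((evaln (t-1) c m).isSome = true ∨ m < np))

def bad (c : Code) (p : List Bool) (x t m : ℕ) : Bool :=
  Option.casesOn (decode m : Option (List Bool)) false
    (fun q => decide (q.length = p.length ∧ beats c t x (encode p) m = true))

def gate (c : Code) (p : List Bool) (x t : ℕ) : Bool :=
  (List.range t).all fun m => ! bad c p x t m

def F (c : Code) (d : ℕ) (p : List Bool) (t : ℕ) : Option (List Bool) :=
  (evaln t c (encode p)).bind fun x =>
    (decode x : Option (List Bool)).bind fun s =>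
      if p.length ≤ 2 * s.length + 2 + d ∧ gate c p x t = true then some s else none

def Wm (c : Code) (d : ℕ) : List Bool →. List Bool :=
  fun p => (Nat.rfind fun k => Part.some ((evaln k c (encode p)).isSome)).bind
    fun t => (F c d p t : Part (List Bool))

/-! ### Computability -/

lemma primrec_evaln3 {α : Type} [Primcodable α] {ft fm : α → ℕ} (c : Code)
    (hft : Primrec ft) (hfm : Primrec fm) : Primrec fun a => evaln (ft a) c (fm a) :=
  primrec_evaln.comp ((hft.pair (Primrec.const c)).pair hfm)

lemma primrec_bad (c : Code) : Primrec fun z : (List Bool × ℕ × ℕ) × ℕ =>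
    bad c z.1.1 z.1.2.1 z.1.2.2 z.2 := by
  unfold bad
  apply Primrec.option_casesOn (Primrec.decode.comp Primrec.snd) (Primrec.const false)
  unfold Primrec₂
  -- pred over ((z, m), q)
  apply PrimrecPred.decide
  apply PrimrecPred.and
  · exact Primrec.eq.comp (Primrec.list_length.comp Primrec.snd)
      (Primrec.list_length.comp (Primrec.fst.comp (Primrec.fst.comp Primrec.fst)))
  · unfold beats
    apply Primrec.eq.comp _ (Primrec.const true)
    apply PrimrecPred.decide
    apply PrimrecPred.and
    · exact Primrec.eq.comp
        (primrec_evaln3 c ((Primrec.snd.comp (Primrec.snd.comp (Primrec.fst.comp Primrec.fst))))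
          (Primrec.snd.comp Primrec.fst))
        (Primrec.option_some.comp (Primrec.fst.comp (Primrec.snd.comp (Primrec.fst.comp Primrec.fst))))
    · apply PrimrecPred.or
      · exact Primrec.eq.comp (Primrec.option_isSome.comp
          (primrec_evaln3 c
            (Primrec.nat_sub.comp (Primrec.snd.comp (Primrec.snd.comp (Primrec.fst.comp Primrec.fst))) (Primrec.const 1))
            (Primrec.snd.comp Primrec.fst)))
          (Primrec.const true)
      · exact Primrec.nat_lt.comp (Primrec.snd.comp Primrec.fst)
          (Primrec.encode.comp (Primrec.fst.comp (Primrec.fst.comp Primrec.fst)))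

lemma list_all_eq_foldr (l : List ℕ) (f : ℕ → Bool) :
    l.all f = l.foldr (fun a r => f a && r) true := by
  induction l with
  | nil => rfl
  | cons a l ih => simp [ih]

lemma primrec_gate (c : Code) : Primrec fun z : List Bool × ℕ × ℕ =>
    gate c z.1 z.2.1 z.2.2 := by
  have : Primrec fun z : List Bool × ℕ × ℕ =>
      (List.range z.2.2).foldr (fun m r => (! bad c z.1 z.2.1 z.2.2 m) && r) true := by
    have hh : Primrec fun w : (List Bool × ℕ × ℕ) × ℕ × Bool =>
        (! bad c w.1.1 w.1.2.1 w.1.2.2 w.2.1) && w.2.2 := by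
      refine (Primrec.dom_bool₂ (· && ·)).comp ?_ (Primrec.snd.comp Primrec.snd)
      refine (Primrec.dom_bool (!·)).comp ?_
      exact (primrec_bad c).comp (Primrec.fst.pair (Primrec.fst.comp Primrec.snd))
    exact (Primrec.list_foldr (Primrec.list_range.comp (Primrec.snd.comp Primrec.snd))
      (Primrec.const true) hh.to₂).of_eq fun z => rfl
  exact this.of_eq fun z => by rw [gate, list_all_eq_foldr]

lemma computable_F (c : Code) (d : ℕ) : Computable₂ (F c d) := by
  have : Primrec fun z : List Bool × ℕ => F c d z.1 z.2 := by
    unfold F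
    apply Primrec.option_bind (primrec_evaln3 c Primrec.snd (Primrec.encode.comp Primrec.fst))
    unfold Primrec₂
    apply Primrec.option_bind (Primrec.decode.comp Primrec.snd)
    unfold Primrec₂
    -- base: ((z, x), s)
    apply Primrec.ite
    · apply PrimrecPred.and
      · exact Primrec.nat_le.comp
          (Primrec.list_length.comp (Primrec.fst.comp (Primrec.fst.comp Primrec.fst)))
          (Primrec.nat_add.comp
            (Primrec.nat_add.comp
              (Primrec.nat_mul.comp (Primrec.const 2) (Primrec.list_length.comp Primrec.snd))
              (Primrec.const 2))
            (Primrec.const d))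
      · exact Primrec.eq.comp
          ((primrec_gate c).comp
            ((Primrec.fst.comp (Primrec.fst.comp Primrec.fst)).pair
              ((Primrec.snd.comp Primrec.fst).pair
                (Primrec.snd.comp (Primrec.fst.comp Primrec.fst)))))
          (Primrec.const true)
    · exact Primrec.option_some.comp Primrec.snd
    · exact Primrec.const none
  exact this.to_comp.to₂

lemma partrec_Wm (c : Code) (d : ℕ) : Partrec (Wm c d) := by
  unfold Wm
  apply Partrec.bind
  · apply Partrec.rfind
    have : Computable₂ fun (p : List Bool) (k : ℕ) => (evaln k c (encode p)).isSome :=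
      (Primrec.option_isSome.comp
        (primrec_evaln3 c Primrec.snd (Primrec.encode.comp Primrec.fst))).to_comp.to₂
    exact this.partrec₂
  · exact (Computable.ofOption (computable_F c d)).to₂

section Sem

variable (c : Code)

noncomputable def tm (p : List Bool) : ℕ := sInf {k | (evaln k c (encode p)).isSome}

variable {V : List Bool →. List Bool}
variable (hc : ∀ p : List Bool, eval c (encode p) = (V p).map encode)

def Earlier (q p : List Bool) : Prop :=
  tm c q < tm c p ∨ (tm c q = tm c p ∧ encode q < encode p)

def Chosen (d : ℕ) (p s : List Bool) : Prop :=
  s ∈ V p ∧ p.length ≤ 2 * s.length + 2 + d ∧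
    ∀ q, s ∈ V q → q.length = p.length → q ≠ p → ¬ Earlier c q p

include hc

lemma memV {p s : List Bool} : s ∈ V p ↔ encode s ∈ eval c (encode p) := by
  rw [hc]
  exact ⟨fun h => Part.mem_map _ h, fun h => by
    obtain ⟨s', hs', he⟩ := Part.mem_map_iff _ |>.1 h
    rwa [← encode_injective he]⟩

lemma halt_nonempty {p s : List Bool} (h : s ∈ V p) :
    {k | (evaln k c (encode p)).isSome}.Nonempty := by
  obtain ⟨k, hk⟩ := evaln_complete.1 ((memV c hc).1 h)
  exact ⟨k, by simp [Set.mem_setOf_eq, Option.isSome_iff_exists]; exact ⟨_, hk⟩⟩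

lemma tm_eq_some {p s : List Bool} (h : s ∈ V p) :
    evaln (tm c p) c (encode p) = some (encode s) := by
  have hmem := Nat.sInf_mem (halt_nonempty c hc h)
  rw [Set.mem_setOf_eq, Option.isSome_iff_exists] at hmem
  obtain ⟨x, hx⟩ := hmem
  have hx' : x ∈ eval c (encode p) := evaln_sound hx
  rw [hc] at hx'
  have : encode s ∈ (V p).map encode := Part.mem_map _ h
  rw [Part.mem_unique hx' this] at hx
  exact hx

omit hc in
lemma tm_lt_none {p : List Bool} {k : ℕ} (hk : k < tm c p) :
    evaln k c (encode p) = none := by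
  have := Nat.notMem_of_lt_sInf hk
  rw [Set.mem_setOf_eq] at this
  exact Option.not_isSome_iff_eq_none.1 this

lemma tm_pos {p s : List Bool} (h : s ∈ V p) : 0 < tm c p := by
  rcases Nat.eq_zero_or_pos (tm c p) with h0 | h1
  · have := tm_eq_some c hc h
    rw [h0] at this
    exact absurd this (by simp [evaln])
  · exact h1

lemma tm_le_some {p s : List Bool} (h : s ∈ V p) {k : ℕ} (hk : tm c p ≤ k) :
    evaln k c (encode p) = some (encode s) :=
  evaln_mono hk (tm_eq_some c hc h)

lemma halt_of_evaln {p : List Bool} {k : ℕ} {x : ℕ} (hk : evaln k c (encode p) = some x) :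
    ∃ s, s ∈ V p ∧ x = encode s := by
  have hx' : x ∈ eval c (encode p) := evaln_sound hk
  rw [hc] at hx'
  obtain ⟨s, hs, he⟩ := Part.mem_map_iff _ |>.1 hx'
  exact ⟨s, hs, he.symm⟩

omit hc in
lemma tm_le_of_evaln {p : List Bool} {k : ℕ} {x : ℕ} (hk : evaln k c (encode p) = some x) :
    tm c p ≤ k :=
  Nat.sInf_le (by simp [Set.mem_setOf_eq, hk])

lemma mem_rfind_iff {p : List Bool} {t : ℕ} (hp : ∃ s, s ∈ V p) :
    t ∈ Nat.rfind (fun k => Part.some ((evaln k c (encode p)).isSome)) ↔ t = tm c p := by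
  obtain ⟨s, hs⟩ := hp
  refine (Nat.mem_rfind (p := fun k => Part.some ((evaln k c (encode p)).isSome))).trans ?_
  simp only [Part.mem_some_iff, eq_comm (a := true), eq_comm (a := false)]
  constructor
  · rintro ⟨h1, h2⟩
    rcases lt_trichotomy t (tm c p) with h | h | h
    · rw [tm_lt_none c h] at h1; simp at h1
    · exact h
    · have := h2 h
      rw [tm_eq_some c hc hs] at this
      simp at this
  · rintro rfl
    refine ⟨by rw [tm_eq_some c hc hs]; rfl, fun {m} hm => by rw [tm_lt_none c hm]; rfl⟩


omit hc in
lemma gate_iff {c : Code} {p : List Bool} {x t : ℕ} :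
    gate c p x t = true ↔ ∀ m < t, bad c p x t m = false := by
  simp [gate, List.all_eq_true, List.mem_range]

omit hc in
lemma bad_eq_true_iff {c : Code} {p q : List Bool} {x t m : ℕ}
    (hd : (decode m : Option (List Bool)) = some q) :
    bad c p x t m = true ↔ (q.length = p.length ∧ beats c t x (encode p) m = true) := by
  rw [bad, hd]
  simp

omit hc in
lemma beats_iff {c : Code} {t x np m : ℕ} :
    beats c t x np m = true ↔
      (evaln t c m = some x ∧ ((evaln (t-1) c m).isSome = true ∨ m < np)) := by
  simp [beats]

lemma mem_Wm {d : ℕ} {p s : List Bool} :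
    s ∈ Wm c d p ↔ Chosen c (V := V) d p s := by
  constructor
  · intro h
    rw [Wm, Part.mem_bind_iff] at h
    obtain ⟨t, ht, hF⟩ := h
    -- halting
    have h1 : (evaln t c (encode p)).isSome = true := by
      have := Nat.rfind_spec ht
      rwa [Part.mem_some_iff, eq_comm] at this
    obtain ⟨x, hx⟩ := Option.isSome_iff_exists.1 h1
    obtain ⟨s₁, hs₁, rfl⟩ := halt_of_evaln c hc hx
    have htt : t = tm c p := (mem_rfind_iff c hc ⟨s₁, hs₁⟩).1 ht
    rw [Part.mem_ofOption] at hF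
    rw [F, hx, Option.bind_some, Encodable.encodek, Option.bind_some] at hF
    split at hF
    case isFalse => cases hF
    case isTrue hcond =>
      rw [Option.mem_def] at hF
      injection hF with hF
      subst hF
      refine ⟨hs₁, hcond.1, fun q hq hlen hne hearly => ?_⟩
      have hgate := gate_iff.1 hcond.2
      have hbound : encode q < tm c q := evaln_bound (by
        rw [tm_eq_some c hc hq]; exact rfl : encode s₁ ∈ evaln (tm c q) c (encode q))
      have htmq : tm c q ≤ t := by
        rcases hearly with h | ⟨h, _⟩
        · omega
        · omega
      have hqlt : encode q < t := lt_of_lt_of_le hbound htmq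
      have hbadm := hgate (encode q) hqlt
      have hbt : bad c p (encode s₁) t (encode q) = true := by
        rw [bad_eq_true_iff (Encodable.encodek q), beats_iff]
        refine ⟨hlen, tm_le_some c hc hq htmq, ?_⟩
        rcases hearly with h | ⟨h, h2⟩
        · left
          rw [tm_le_some c hc hq (by rw [htt] at *; omega : tm c q ≤ t - 1)]
          rfl
        · right
          exact h2
      rw [hbadm] at hbt
      cases hbt
  · rintro ⟨hs, hlen, hmin⟩
    rw [Wm, Part.mem_bind_iff]
    refine ⟨tm c p, (mem_rfind_iff c hc ⟨s, hs⟩).2 rfl, ?_⟩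
    rw [Part.mem_ofOption]
    rw [F, tm_le_some c hc hs le_rfl, Option.bind_some, Encodable.encodek, Option.bind_some]
    have hg : gate c p (encode s) (tm c p) = true := by
      rw [gate_iff]
      intro m hm
      by_contra hbad
      rw [Bool.not_eq_false] at hbad
      rcases hdm : (decode m : Option (List Bool)) with _ | q
      · rw [bad, hdm] at hbad; cases hbad
      obtain ⟨hlenq, hbeats⟩ := (bad_eq_true_iff hdm).1 hbad
      have hmq : encode q = m := list_decode_encode hdm
      rw [beats_iff] at hbeats
      obtain ⟨heval, hdisj⟩ := hbeats
      subst hmq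
      obtain ⟨s', hs', hse⟩ := halt_of_evaln c hc heval
      have hss : s' = s := encode_injective hse.symm
      subst hss
      have htmq : tm c q ≤ tm c p := tm_le_of_evaln c heval
      by_cases hqp : q = p
      · rcases hdisj with hle | hlt
        · have h0 : 0 < tm c p := tm_pos c hc hs
          rw [hqp, tm_lt_none c (by omega : tm c p - 1 < tm c p)] at hle
          cases hle
        · rw [hqp] at hlt
          exact absurd hlt (lt_irrefl _)
      · refine hmin q hs' hlenq hqp ?_
        rcases hdisj with hle | hlt
        · left
          have h0 : 0 < tm c p := tm_pos c hc hs
          have : tm c q ≤ tm c p - 1 := tm_le_of_evaln c (Option.isSome_iff_exists.1 hle |>.choose_spec)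
          omega
        · rcases lt_or_eq_of_le htmq with h | h
          · exact Or.inl h
          · exact Or.inr ⟨h, hlt⟩
    rw [if_pos ⟨hlen, hg⟩]
    rfl

omit hc in
lemma earlier_total {q p : List Bool} (hne : q ≠ p) : Earlier c q p ∨ Earlier c p q := by
  have henc : encode q ≠ encode p := fun h => hne (encode_injective h)
  rcases lt_trichotomy (tm c q) (tm c p) with h | h | h
  · exact Or.inl (Or.inl h)
  · rcases lt_or_gt_of_ne henc with h2 | h2
    · exact Or.inl (Or.inr ⟨h, h2⟩)
    · exact Or.inr (Or.inr ⟨h.symm, h2⟩)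
  · exact Or.inr (Or.inl h)

omit hc in
lemma chosen_unique {d : ℕ} {p₁ p₂ s : List Bool} (h1 : Chosen c (V := V) d p₁ s)
    (h2 : Chosen c (V := V) d p₂ s) (hlen : p₁.length = p₂.length) : p₁ = p₂ := by
  by_contra hne
  rcases earlier_total c (q := p₁) (p := p₂) hne with h | h
  · exact h2.2.2 p₁ h1.1 hlen hne h
  · exact h1.2.2 p₂ h2.1 hlen.symm (fun he => hne he.symm) h

omit hc in
lemma exists_chosen {d : ℕ} {s : List Bool} {n : ℕ} (hn : n ≤ 2 * s.length + 2 + d)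
    (h : ∃ p, p.length = n ∧ s ∈ V p) :
    ∃ p, p.length = n ∧ Chosen c (V := V) d p s := by
  classical
  set T : Set ℕ := {k | ∃ p : List Bool, p.length = n ∧ s ∈ V p ∧ tm c p = k} with hT
  have hTne : T.Nonempty := by
    obtain ⟨p, hp1, hp2⟩ := h
    exact ⟨tm c p, p, hp1, hp2, rfl⟩
  set t₀ := sInf T with ht₀
  set E : Set ℕ := {e | ∃ p : List Bool, p.length = n ∧ s ∈ V p ∧ tm c p = t₀ ∧ encode p = e}
    with hE
  have hEne : E.Nonempty := by
    obtain ⟨p, hp1, hp2, hp3⟩ := Nat.sInf_mem hTne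
    exact ⟨encode p, p, hp1, hp2, hp3, rfl⟩
  obtain ⟨p, hp1, hp2, hp3, hp4⟩ := Nat.sInf_mem hEne
  refine ⟨p, hp1, hp2, hp1 ▸ hn, fun q hq hql hqp hearly => ?_⟩
  rcases hearly with hlt | ⟨heq, hlt⟩
  · rw [hp3] at hlt
    have hle : sInf T ≤ tm c q := Nat.sInf_le (⟨q, hql.trans hp1, hq, rfl⟩ : tm c q ∈ T)
    rw [← ht₀] at hle
    omega
  · rw [hp4] at hlt
    rw [hp3] at heq
    have hle : sInf E ≤ encode q := Nat.sInf_le (⟨q, hql.trans hp1, hq, heq, rfl⟩ : encode q ∈ E)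
    omega

omit hc in
lemma min_chosen {d : ℕ} {s : List Bool} (h : ∃ q, s ∈ V q)
    (hd : ∃ q, s ∈ V q ∧ q.length ≤ 2 * s.length + 2 + d) :
    ∃ p₀, Chosen c (V := V) d p₀ s ∧ ∀ q, s ∈ V q → p₀.length ≤ q.length := by
  set L : Set ℕ := {m | ∃ q : List Bool, q.length = m ∧ s ∈ V q} with hL
  have hLne : L.Nonempty := by obtain ⟨q, hq⟩ := h; exact ⟨q.length, q, rfl, hq⟩
  obtain ⟨q₁, hq₁len, hq₁⟩ := Nat.sInf_mem hLne
  obtain ⟨qb, hqb, hqblen⟩ := hd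
  have hbound : sInf L ≤ 2 * s.length + 2 + d :=
    le_trans (Nat.sInf_le ⟨qb, rfl, hqb⟩) hqblen
  obtain ⟨p₀, hp₀len, hp₀⟩ := exists_chosen c (d := d) (s := s) (n := sInf L) hbound
    ⟨q₁, hq₁len, hq₁⟩
  exact ⟨p₀, hp₀, fun q hq => hp₀len ▸ Nat.sInf_le ⟨q, rfl, hq⟩⟩

end Sem


end FiniteFiberAux

/-- For every optimal prefix-free machine `V` there is an optimal prefix-free machine `W` with
(i) `H_W = H_V`, (ii) every `W⁻¹(s)` finite, and (iii) a total recursive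
`f : {0,1}* → ℕ⁺` with `#W⁻¹(s) ≤ f(s)` for every `s`. -/
theorem exists_optimal_machine_finite_fibers (V : List Bool →. List Bool)
    (hV : OptimalPFM V) :
    ∃ W : List Bool →. List Bool, OptimalPFM W ∧
      (∀ s, Hm W s = Hm V s) ∧
      (∀ s, {p : List Bool | s ∈ W p}.Finite) ∧
      ∃ f : List Bool → ℕ, Computable f ∧ (∀ s, 0 < f s) ∧
        (∀ s, {p : List Bool | s ∈ W p}.ncard ≤ f s) := by
  classical
  obtain ⟨⟨hVpr, hVpf⟩, hVopt⟩ := hV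
  -- the duplication-code machine is a prefix-free machine
  have hCpf : PFMachine FiniteFiberAux.Cdup := by
    refine ⟨FiniteFiberAux.Cdup_partrec, ?_⟩
    intro p hp q hq hpre
    obtain ⟨s, hs⟩ := Part.dom_iff_mem.1 hp
    obtain ⟨s', hs'⟩ := Part.dom_iff_mem.1 hq
    rw [FiniteFiberAux.mem_Cdup] at hs hs'
    rw [FiniteFiberAux.dec2_some hs, FiniteFiberAux.dec2_some hs'] at hpre ⊢
    rw [FiniteFiberAux.enc2_prefix hpre]
  obtain ⟨d, hd⟩ := hVopt _ hCpf
  have hds : ∀ s : List Bool, ∃ q, s ∈ V q ∧ q.length ≤ 2 * s.length + 2 + d := by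
    intro s
    obtain ⟨q, hq1, hq2⟩ := hd (FiniteFiberAux.enc2 s) s
      (FiniteFiberAux.mem_Cdup.2 (FiniteFiberAux.dec2_enc2 s))
    exact ⟨q, hq1, by rwa [FiniteFiberAux.enc2_length] at hq2⟩
  -- a code for V
  obtain ⟨c, hceq⟩ := Nat.Partrec.Code.exists_code.1 hVpr
  have hc : ∀ p : List Bool,
      Nat.Partrec.Code.eval c (Encodable.encode p) = (V p).map Encodable.encode := by
    intro p
    rw [hceq]
    simp [Encodable.encodek]
  have hmem : ∀ p s : List Bool,
      s ∈ FiniteFiberAux.Wm c d p ↔ FiniteFiberAux.Chosen c (V := V) d p s :=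
    fun p s => FiniteFiberAux.mem_Wm c hc
  have hsubV : ∀ s : List Bool,
      {p : List Bool | s ∈ FiniteFiberAux.Wm c d p} ⊆ {p : List Bool | s ∈ V p} :=
    fun s p hp => ((hmem p s).1 hp).1
  have hinj : ∀ s : List Bool,
      Set.InjOn List.length {p : List Bool | s ∈ FiniteFiberAux.Wm c d p} :=
    fun s p₁ h₁ p₂ h₂ hl =>
      FiniteFiberAux.chosen_unique c ((hmem p₁ s).1 h₁) ((hmem p₂ s).1 h₂) hl
  have himg : ∀ s : List Bool,
      List.length '' {p : List Bool | s ∈ FiniteFiberAux.Wm c d p} ⊆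
        Set.Iic (2 * s.length + 2 + d) := by
    rintro s x ⟨p, hp, rfl⟩
    exact ((hmem p s).1 hp).2.1
  have hfin : ∀ s : List Bool, {p : List Bool | s ∈ FiniteFiberAux.Wm c d p}.Finite :=
    fun s => Set.Finite.of_finite_image ((Set.finite_Iic _).subset (himg s)) (hinj s)
  refine ⟨FiniteFiberAux.Wm c d, ⟨⟨FiniteFiberAux.partrec_Wm c d, ?_⟩, ?_⟩, ?_, hfin, ?_⟩
  · -- prefix-free domain
    intro p hp q hq hpre
    obtain ⟨s, hs⟩ := Part.dom_iff_mem.1 hp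
    obtain ⟨s', hs'⟩ := Part.dom_iff_mem.1 hq
    exact hVpf p (Part.dom_iff_mem.2 ⟨s, ((hmem p s).1 hs).1⟩)
      q (Part.dom_iff_mem.2 ⟨s', ((hmem q s').1 hs').1⟩) hpre
  · -- optimality
    intro C hC
    obtain ⟨d', hd'⟩ := hVopt C hC
    refine ⟨d', fun p s hs => ?_⟩
    obtain ⟨q, hq, hql⟩ := hd' p s hs
    obtain ⟨p₀, hp₀, hmin⟩ := FiniteFiberAux.min_chosen c (d := d) ⟨q, hq⟩ (hds s)
    exact ⟨p₀, (hmem p₀ s).2 hp₀, le_trans (hmin q hq) hql⟩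
  · -- Hm equality
    intro s
    by_cases hne : ∃ q, s ∈ V q
    · obtain ⟨p₀, hp₀, hmin⟩ := FiniteFiberAux.min_chosen c (d := d) hne (hds s)
      apply le_antisymm
      · refine le_trans (sInf_le ⟨p₀, (hmem p₀ s).2 hp₀, rfl⟩) ?_
        refine le_sInf ?_
        rintro x ⟨q, hq, rfl⟩
        exact Nat.cast_le.2 (hmin q hq)
      · exact sInf_le_sInf (Set.image_mono (hsubV s))
    · have h1 : {p : List Bool | s ∈ FiniteFiberAux.Wm c d p} = ∅ :=
        Set.eq_empty_of_forall_notMem fun p hp => hne ⟨p, hsubV s hp⟩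
      have h2 : {p : List Bool | s ∈ V p} = ∅ :=
        Set.eq_empty_of_forall_notMem fun p hp => hne ⟨p, hp⟩
      rw [Hm, Hm, h1, h2]
  · -- the computable bound
    refine ⟨fun s => 2 * s.length + d + 3, ?_, fun s => by positivity, fun s => ?_⟩
    · exact (Primrec.nat_add.comp
        (Primrec.nat_add.comp
          (Primrec.nat_mul.comp (Primrec.const 2) Primrec.list_length)
          (Primrec.const d))
        (Primrec.const 3)).to_comp
    · have h1 : {p : List Bool | s ∈ FiniteFiberAux.Wm c d p}.ncard =
          (List.length '' {p : List Bool | s ∈ FiniteFiberAux.Wm c d p}).ncard :=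
        (Set.ncard_image_of_injOn (hinj s)).symm
      have h2 : (List.length '' {p : List Bool | s ∈ FiniteFiberAux.Wm c d p}).ncard ≤
          (Set.Iic (2 * s.length + 2 + d)).ncard :=
        Set.ncard_le_ncard (himg s) (Set.finite_Iic _)
      have h3 : (Set.Iic (2 * s.length + 2 + d)).ncard = 2 * s.length + 2 + d + 1 := by
        rw [← Finset.coe_Iic, Set.ncard_coe_finset, Nat.card_Iic]
      show {p : List Bool | s ∈ FiniteFiberAux.Wm c d p}.ncard ≤ 2 * s.length + d + 3
      omega
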